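/- The map Pl_w sending the class of a rank-d matrix A ∈ M_d(n,d) to the point [det(A_{λ⁰}) : ... : det(A_{λ^m})] in WP(c₀,...,c_m) is well defined and injective. -/

import Mathlib

open Matrix in
private lemma key_cramer {n d : ℕ} (M : Matrix (Fin n) (Fin d) ℂ) (f : Fin d → Fin n)
    (r : Fin n) (j : Fin d) :
    ∑ k, (M.submatrix (Function.update f k r) id).det * M (f k) j
      = (M.submatrix f id).det * M r j := by
  have h := Matrix.mulVec_cramer (M.submatrix f id)ᵀ (fun j => M r j)
  have h2 := congrFun h j
  simp only [Matrix.mulVec, dotProduct, Matrix.cramer_apply, Pi.smul_apply,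
    smul_eq_mul, Matrix.det_transpose, Matrix.transpose_apply, Matrix.submatrix_apply,
    id_eq] at h2
  rw [← h2]
  apply Finset.sum_congr rfl
  intro k _
  rw [mul_comm]
  congr 1
  rw [Matrix.updateCol_transpose, Matrix.det_transpose]
  congr 1
  ext i j'
  rw [Matrix.updateRow_apply]
  simp [Function.update_apply]
  split <;> simp

private lemma plucker_main {n d : ℕ} (A B : Matrix (Fin n) (Fin d) ℂ) (c : ℂ) (hc : c ≠ 0)
    (hex : ∃ f : Fin d → Fin n, (A.submatrix f id).det ≠ 0)
    (h : ∀ f : Fin d → Fin n, (B.submatrix f id).det = c * (A.submatrix f id).det) :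
    ∃ T : Matrix (Fin d) (Fin d) ℂ, T.det = c ∧ B = A * T := by
  classical
  obtain ⟨f, hAf⟩ := hex
  set M : Matrix (Fin d) (Fin d) ℂ := A.submatrix f id with hM
  set N : Matrix (Fin d) (Fin d) ℂ := B.submatrix f id with hN
  have hdetN : N.det = c * M.det := h f
  have hMU : IsUnit M.det := isUnit_iff_ne_zero.mpr hAf
  refine ⟨M⁻¹ * N, ?_, ?_⟩
  · rw [Matrix.det_mul, Matrix.det_nonsing_inv, hdetN, Ring.inverse_eq_inv']
    field_simp
  · have hMT : M * (M⁻¹ * N) = N := by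
      rw [← Matrix.mul_assoc, Matrix.mul_nonsing_inv M hMU, Matrix.one_mul]
    have hBident : ∀ r j, M.det * B r j
        = ∑ k, (A.submatrix (Function.update f k r) id).det * B (f k) j := by
      intro r j
      have hk := key_cramer B f r j
      apply mul_left_cancel₀ hc
      rw [← mul_assoc, ← hdetN, ← hk]
      rw [Finset.mul_sum]
      apply Finset.sum_congr rfl
      intro k _
      rw [h (Function.update f k r)]
      ring
    ext r j
    apply mul_left_cancel₀ hAf
    rw [hBident r j]
    have : M.det * (A * (M⁻¹ * N)) r j
        = ∑ p, (M.det * A r p) * (M⁻¹ * N) p j := by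
      rw [Matrix.mul_apply, Finset.mul_sum]
      exact Finset.sum_congr rfl fun p _ => by ring
    rw [this]
    have hstep : ∀ p, M.det * A r p
        = ∑ k, (A.submatrix (Function.update f k r) id).det * A (f k) p :=
      fun p => (key_cramer A f r p).symm
    symm
    calc ∑ p, (M.det * A r p) * (M⁻¹ * N) p j
        = ∑ p, ∑ k, ((A.submatrix (Function.update f k r) id).det * A (f k) p)
            * (M⁻¹ * N) p j := by
          exact Finset.sum_congr rfl fun p _ => by rw [hstep p, Finset.sum_mul]
      _ = ∑ k, (A.submatrix (Function.update f k r) id).det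
            * ∑ p, A (f k) p * (M⁻¹ * N) p j := by
          rw [Finset.sum_comm]
          exact Finset.sum_congr rfl fun k _ => by
            rw [Finset.mul_sum]; exact Finset.sum_congr rfl fun p _ => by ring
      _ = ∑ k, (A.submatrix (Function.update f k r) id).det * B (f k) j := by
          apply Finset.sum_congr rfl
          intro k _
          congr 1
          have : ∑ p, A (f k) p * (M⁻¹ * N) p j = (M * (M⁻¹ * N)) k j := by
            rw [Matrix.mul_apply]
            exact Finset.sum_congr rfl fun p _ => by rw [hM]; simp [Matrix.submatrix_apply]
          rw [this, hMT, hN]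
          simp
    done


private lemma minor_extend {n d : ℕ} (A B : Matrix (Fin n) (Fin d) ℂ) (c : ℂ)
    (h0 : ∀ g : Fin d → Fin n, StrictMono g →
      (B.submatrix g id).det = c * (A.submatrix g id).det)
    (f : Fin d → Fin n) :
    (B.submatrix f id).det = c * (A.submatrix f id).det := by
  by_cases hf : Function.Injective f
  · -- sort f
    set s : Finset (Fin n) := Finset.image f Finset.univ with hs
    have hcard : s.card = d := by
      rw [hs, Finset.card_image_of_injective _ hf, Finset.card_univ, Fintype.card_fin]
    let e := s.orderIsoOfFin hcard
    set g : Fin d → Fin n := fun i => (e i : Fin n) with hg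
    have hgmono : StrictMono g := fun i j hij => e.strictMono hij
    have hmem : ∀ i, f i ∈ s := fun i => Finset.mem_image_of_mem f (Finset.mem_univ i)
    set σ' : Fin d → Fin d := fun i => e.symm ⟨f i, hmem i⟩ with hσ'
    have hσinj : Function.Injective σ' := by
      intro i j hij
      apply hf
      have h2 : (e (e.symm ⟨f i, hmem i⟩) : Fin n) = (e (e.symm ⟨f j, hmem j⟩) : Fin n) := by
        exact congrArg (fun x => (e x : Fin n)) hij
      simpa using h2
    let σ : Equiv.Perm (Fin d) := Equiv.ofBijective σ' (Finite.injective_iff_bijective.mp hσinj)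
    have hfg : ∀ i, f i = g (σ i) := by
      intro i
      show f i = (e (e.symm ⟨f i, hmem i⟩) : Fin n)
      simp
    have hdA : (A.submatrix f id).det = (Equiv.Perm.sign σ : ℂ) * (A.submatrix g id).det := by
      rw [← Matrix.det_permute σ (A.submatrix g id)]
      congr 1
      ext i j
      simp [hfg i]
    have hdB : (B.submatrix f id).det = (Equiv.Perm.sign σ : ℂ) * (B.submatrix g id).det := by
      rw [← Matrix.det_permute σ (B.submatrix g id)]
      congr 1
      ext i j
      simp [hfg i]
    rw [hdA, hdB, h0 g hgmono]
    ring
  · -- non-injective: both dets zero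
    rw [Function.not_injective_iff] at hf
    obtain ⟨i, j, hij, hne⟩ := hf
    have hA : (A.submatrix f id).det = 0 :=
      Matrix.det_zero_of_row_eq hne (by ext k; simp [hij])
    have hB : (B.submatrix f id).det = 0 :=
      Matrix.det_zero_of_row_eq hne (by ext k; simp [hij])
    rw [hA, hB, mul_zero]


open Matrix in
private lemma exists_minor_ne_zero {n d : ℕ} (A : Matrix (Fin n) (Fin d) ℂ) (hA : A.rank = d) :
    ∃ f : Fin d → Fin n, (A.submatrix f id).det ≠ 0 := by
  classical
  -- rows of A span ℂ^d
  have hspan : Submodule.span ℂ (Set.range fun i => A i) = ⊤ := by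
    have h1 : Aᵀ.rank = d := by rw [Matrix.rank_transpose, hA]
    have h2 : Aᵀ.rank = Module.finrank ℂ (Submodule.span ℂ (Set.range Aᵀᵀ)) :=
      Matrix.rank_eq_finrank_span_cols Aᵀ
    rw [Matrix.transpose_transpose] at h2
    apply Submodule.eq_top_of_finrank_eq
    rw [← h2, h1]
    simp [Module.finrank_fintype_fun_eq_card]
  obtain ⟨b, hbsub, hbspan, hbli⟩ :=
    exists_linearIndependent ℂ (Set.range fun i => A i)
  rw [hspan] at hbspan
  have hbfin : b.Finite := (Set.finite_range _).subset hbsub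
  have : Fintype b := hbfin.fintype
  -- b is a basis
  let bas : Module.Basis b ℂ (Fin d → ℂ) := Module.Basis.mk hbli (by rw [Subtype.range_coe, hbspan])
  have hcardb : Fintype.card b = d := by
    have := Module.finrank_eq_card_basis bas
    simp [Module.finrank_fintype_fun_eq_card] at this
    rw [← Nat.card_eq_fintype_card, Nat.card_coe_set_eq]
    omega
  -- choose preimages
  have hchoice : ∀ x : b, ∃ i : Fin n, A i = (x : Fin d → ℂ) := by
    intro x
    obtain ⟨i, hi⟩ := hbsub x.2
    exact ⟨i, hi⟩
  choose ψ hψ using hchoice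
  let e : Fin d ≃ b := (Fintype.equivFinOfCardEq hcardb).symm
  refine ⟨fun k => ψ (e k), ?_⟩
  have hrows : LinearIndependent ℂ (fun k => (A.submatrix (fun k => ψ (e k)) id) k) := by
    have : (fun k => (A.submatrix (fun k => ψ (e k)) id) k)
        = (fun x : b => (x : Fin d → ℂ)) ∘ e := by
      funext k
      ext j
      simp [Matrix.submatrix_apply, hψ (e k)]
    rw [this]
    exact hbli.comp e e.injective
  have hU := Matrix.linearIndependent_rows_iff_isUnit.mp hrows
  have := (Matrix.isUnit_iff_isUnit_det _).mp hU
  exact this.ne_zero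

private lemma diag_minor {n d : ℕ} (M : Matrix (Fin n) (Fin d) ℂ) (w : Fin n → ℂ)
    (f : Fin d → Fin n) :
    ((Matrix.diagonal w * M).submatrix f id).det
      = (∏ q, w (f q)) * (M.submatrix f id).det := by
  have : (Matrix.diagonal w * M).submatrix f id
      = Matrix.diagonal (fun q => w (f q)) * M.submatrix f id := by
    ext i j
    simp [Matrix.mul_apply, Matrix.diagonal_apply, Matrix.submatrix_apply, Finset.sum_ite_eq]
  rw [this, Matrix.det_mul, Matrix.det_diagonal]

theorem pluecker_well_defined_and_injective
    (n d a : ℕ) (hd : 0 < d) (hdn : d < n) (ha : 0 < a) (W : Fin n → ℕ)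
    (m : ℕ) (lam : Fin (m + 1) → Fin d → Fin n)
    (hmono : ∀ i, StrictMono (lam i))
    (henum : ∀ f : Fin d → Fin n, StrictMono f → ∃! i, lam i = f)
    (A B : Matrix (Fin n) (Fin d) ℂ) (hA : A.rank = d) (hB : B.rank = d) :
    (∃ (T : Matrix (Fin d) (Fin d) ℂ) (t : ℂ), t ≠ 0 ∧ t ^ a = T.det ∧
        B = Matrix.diagonal (fun i => t ^ (W i)) * A * T) ↔
    (∃ t : ℂ, t ≠ 0 ∧ ∀ i, (B.submatrix (lam i) id).det =
        t ^ (a + ∑ q, W (lam i q)) * (A.submatrix (lam i) id).det) := by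
  constructor
  · rintro ⟨T, t, ht0, hta, hBeq⟩
    refine ⟨t, ht0, fun i => ?_⟩
    have hsub : B.submatrix (lam i) id
        = ((Matrix.diagonal (fun r => t ^ (W r)) * A).submatrix (lam i) id) * T := by
      ext p q
      rw [hBeq]
      simp [Matrix.mul_apply, Matrix.submatrix_apply]
    rw [hsub, Matrix.det_mul, diag_minor, ← hta]
    rw [Finset.prod_pow_eq_pow_sum]
    rw [pow_add]
    ring
  · rintro ⟨t, ht0, hmin⟩
    have hc : (t : ℂ) ^ a ≠ 0 := pow_ne_zero _ ht0
    set B' : Matrix (Fin n) (Fin d) ℂ :=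
      Matrix.diagonal (fun i => (t ^ (W i))⁻¹) * B with hB'
    have hmin' : ∀ g : Fin d → Fin n, StrictMono g →
        (B'.submatrix g id).det = t ^ a * (A.submatrix g id).det := by
      intro g hg
      obtain ⟨i, hi, -⟩ := henum g hg
      rw [hB', diag_minor]
      rw [← hi] at *
      rw [hmin i, pow_add]
      have hprod : (∏ q, (t ^ (W (lam i q)))⁻¹) * t ^ (∑ q, W (lam i q)) = 1 := by
        rw [← Finset.prod_pow_eq_pow_sum, Finset.prod_inv_distrib, inv_mul_cancel₀]
        exact Finset.prod_ne_zero_iff.mpr fun q _ => pow_ne_zero _ ht0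
      calc (∏ q, (t ^ (W (lam i q)))⁻¹) *
            (t ^ a * t ^ (∑ q, W (lam i q)) * (A.submatrix (lam i) id).det)
          = ((∏ q, (t ^ (W (lam i q)))⁻¹) * t ^ (∑ q, W (lam i q))) *
            (t ^ a * (A.submatrix (lam i) id).det) := by ring
        _ = t ^ a * (A.submatrix (lam i) id).det := by rw [hprod, one_mul]
    have hall : ∀ f : Fin d → Fin n,
        (B'.submatrix f id).det = t ^ a * (A.submatrix f id).det :=
      minor_extend A B' (t ^ a) hmin'
    obtain ⟨T, hTdet, hB'T⟩ := plucker_main A B' (t ^ a) hc (exists_minor_ne_zero A hA) hall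
    refine ⟨T, t, ht0, hTdet.symm, ?_⟩
    have hDD : Matrix.diagonal (fun i : Fin n => (t : ℂ) ^ (W i)) *
        Matrix.diagonal (fun i => (t ^ (W i))⁻¹) = 1 := by
      have h1 : (fun i : Fin n => t ^ (W i) * (t ^ (W i))⁻¹) = fun _ => (1 : ℂ) :=
        funext fun i => mul_inv_cancel₀ (pow_ne_zero _ ht0)
      rw [Matrix.diagonal_mul_diagonal, h1, Matrix.diagonal_one]
    calc B = 1 * B := (Matrix.one_mul B).symm
      _ = Matrix.diagonal (fun i : Fin n => (t : ℂ) ^ (W i)) * B' := by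
          rw [hB', ← Matrix.mul_assoc, hDD]
      _ = Matrix.diagonal (fun i => t ^ (W i)) * A * T := by
          rw [hB'T, Matrix.mul_assoc]
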